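/- Let A be a finite-dimensional split commutative semisimple Frobenius ∗-algebra over ℂ with orthonormal basis {b_i} (with respect to ⟨a,c⟩ = λ(ac*)) such that the structure constants of multiplication in this basis, defined by b_i · b_j = Σ_k N_{ij}^k b_k, are complex numbers. Then the Verlinde-type formula holds: N_{ij}^k = Σ_φ φ(b_i) φ(b_j) conj(φ(b_k)) / f_φ, where the sum is over all characters φ of A and f_φ = φ(Σ_i φ(b_i) b_i*) is the formal codegree of φ. -/

import Mathlib

open scoped BigOperators

/-- Verlinde-type formula in a finite-dimensional split commutative
semisimple Frobenius ∗-algebra over ℂ with orthonormal distinguished basis: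
the structure constants are
`N_{ij}^k = ∑_φ φ(b i) φ(b j) conj(φ(b k)) / f_φ`,
where the sum is over all characters and `f_φ = φ(∑ l, φ(b l) • (b l)*)`. -/
theorem stmt3 {A : Type*} [CommRing A] [Algebra ℂ A] [FiniteDimensional ℂ A]
    {ι : Type*} [Fintype ι] [DecidableEq ι] [Fintype (A →ₐ[ℂ] ℂ)]
    (split : A ≃ₐ[ℂ] (ι → ℂ))
    (lam : A →ₗ[ℂ] ℂ)
    (hnd : ∀ a : A, (∀ c : A, lam (a * c) = 0) → a = 0)
    (st : A → A)
    (hst_add : ∀ a c : A, st (a + c) = st a + st c)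
    (hst_smul : ∀ (z : ℂ) (a : A), st (z • a) = (starRingEnd ℂ z) • st a)
    (hst_mul : ∀ a c : A, st (a * c) = st c * st a)
    (hst_invol : ∀ a : A, st (st a) = a)
    (b : ι → A) (hb : Module.Basis ι ℂ A) (hbe : ∀ i, hb i = b i)
    (σ : ι ≃ ι) (hstb : ∀ i, st (b i) = b (σ i))
    (horthonormal : ∀ i j, lam (b i * st (b j)) = if i = j then 1 else 0)
    (hposdef : ∀ a : A, a ≠ 0 → ∃ r : ℝ, 0 < r ∧ lam (a * st a) = (r : ℂ))
    (hchar_st : ∀ (ψ : A →ₐ[ℂ] ℂ) (a : A), ψ (st a) = starRingEnd ℂ (ψ a))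
    (hfne : ∀ φ : A →ₐ[ℂ] ℂ, φ (∑ l, φ (b l) • st (b l)) ≠ 0)
    (N : ι → ι → ι → ℂ)
    (hN : ∀ i j, b i * b j = ∑ k, N i j k • b k) :
    ∀ i j k, N i j k =
      ∑ φ : A →ₐ[ℂ] ℂ, φ (b i) * φ (b j) * starRingEnd ℂ (φ (b k)) /
        φ (∑ l, φ (b l) • st (b l)) := by
  classical
  -- characters coming from coordinates
  set φt : ι → (A →ₐ[ℂ] ℂ) := fun t => (Pi.evalAlgHom ℂ (fun _ => ℂ) t).comp split.toAlgHom
    with hφt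
  have hφt_apply : ∀ t a, φt t a = split a t := fun t a => rfl
  -- primitive idempotents
  set e : ι → A := fun t => split.symm (Pi.single t 1) with he
  have hse : ∀ t, split (e t) = Pi.single t 1 := fun t => split.apply_symm_apply _
  have hsum_e : (∑ t, e t) = 1 := by
    apply split.injective
    rw [map_sum, map_one]
    simp only [hse]
    exact Finset.univ_sum_single (1 : ι → ℂ)
  have hsingle : ∀ (s t : ι), (Pi.single s (1:ℂ) : ι → ℂ) t = if t = s then 1 else 0 :=
    fun s t => Pi.single_apply s 1 t
  have hee : ∀ s t, e s * e t = if s = t then e t else 0 := by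
    intro s t
    apply split.injective
    rw [map_mul, hse, hse]
    by_cases h : s = t
    · subst h
      rw [if_pos rfl, hse]
      funext x
      rw [Pi.mul_apply, hsingle]
      split_ifs <;> norm_num
    · rw [if_neg h, map_zero]
      funext x
      rw [Pi.mul_apply, hsingle s x, hsingle t x, Pi.zero_apply]
      by_cases h1 : x = s
      · rw [if_pos h1, if_neg (fun h2 => h (h1.symm.trans h2)), mul_zero]
      · rw [if_neg h1, zero_mul]
  -- expansion of any a in the idempotents
  have haux : ∀ a : A, a = ∑ t, split a t • e t := by
    intro a
    apply split.injective
    rw [map_sum]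
    simp only [map_smul, hse]
    funext x
    rw [Finset.sum_apply]
    simp only [Pi.smul_apply, hsingle, smul_eq_mul, mul_ite, mul_one, mul_zero]
    rw [Finset.sum_ite_eq Finset.univ x (fun t => split a t), if_pos (Finset.mem_univ x)]
  set w : ι → ℂ := fun t => lam (e t) with hw
  have hlam_coord : ∀ a : A, lam a = ∑ t, split a t * w t := by
    intro a
    conv_lhs => rw [haux a]
    rw [map_sum]
    simp [smul_eq_mul, hw]
  have hst_coord : ∀ (a : A) t, split (st a) t = starRingEnd ℂ (split a t) :=
    fun a t => hchar_st (φt t) a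
  -- orthonormality in coordinates
  have horth_coord : ∀ m k, (∑ t, split (b m) t * starRingEnd ℂ (split (b k) t) * w t)
      = if m = k then 1 else 0 := by
    intro m k
    rw [← horthonormal m k, hlam_coord]
    congr 1
    funext t
    rw [map_mul, Pi.mul_apply, hst_coord]
  -- expansion in the orthonormal basis
  have hexpand : ∀ a : A, a = ∑ l, lam (a * st (b l)) • b l := by
    intro a
    set c : ι → ℂ := fun l => hb.repr a l with hc
    have ha : a = ∑ l, c l • b l := by
      conv_lhs => rw [← hb.sum_repr a]
      refine Finset.sum_congr rfl fun l _ => by rw [hbe]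
    have hcoef : ∀ m, lam (a * st (b m)) = c m := by
      intro m
      conv_lhs => rw [ha]
      rw [Finset.sum_mul, map_sum]
      have : ∀ l, lam ((c l • b l) * st (b m)) = c l * (if l = m then 1 else 0) := by
        intro l
        rw [smul_mul_assoc, map_smul, smul_eq_mul, horthonormal]
      simp only [this]
      simp
    calc a = ∑ l, c l • b l := ha
      _ = ∑ l, lam (a * st (b l)) • b l :=
        Finset.sum_congr rfl fun l _ => by rw [hcoef l]
  -- expansion of the idempotents in the basis
  have he_expand : ∀ t, e t = ∑ l, (starRingEnd ℂ (split (b l) t) * w t) • b l := by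
    intro t
    conv_lhs => rw [hexpand (e t)]
    refine Finset.sum_congr rfl fun l _ => ?_
    congr 1
    rw [hlam_coord]
    have : ∀ s, split (e t * st (b l)) s * w s
        = if s = t then starRingEnd ℂ (split (b l) s) * w s else 0 := by
      intro s
      rw [map_mul, Pi.mul_apply, hse, hst_coord, Pi.single_apply]
      split_ifs <;> ring
    simp only [this]
    simp
  -- the formal codegrees
  have hf_eq : ∀ φ : A →ₐ[ℂ] ℂ, φ (∑ l, φ (b l) • st (b l))
      = ∑ l, φ (b l) * starRingEnd ℂ (φ (b l)) := by
    intro φ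
    rw [map_sum]
    refine Finset.sum_congr rfl fun l _ => ?_
    rw [map_smul, smul_eq_mul, hchar_st]
  have hwf : ∀ t, w t * φt t (∑ l, φt t (b l) • st (b l)) = 1 := by
    intro t
    have h1 : φt t (e t) = 1 := by
      rw [hφt_apply, hse, Pi.single_apply, if_pos rfl]
    have h2 : φt t (e t) = ∑ l, (starRingEnd ℂ (split (b l) t) * w t) * split (b l) t := by
      conv_lhs => rw [he_expand t]
      rw [map_sum]
      refine Finset.sum_congr rfl fun l _ => ?_
      rw [map_smul, smul_eq_mul, hφt_apply]
    rw [hf_eq]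
    rw [h1] at h2
    rw [Finset.mul_sum]
    rw [h2]
    refine Finset.sum_congr rfl fun l _ => ?_
    rw [hφt_apply]
    ring
  -- φt is a bijection
  have hinj : Function.Injective φt := by
    intro s t h
    have h0 : (Pi.single t (1:ℂ) : ι → ℂ) s = 1 := by
      have h' := congrArg (fun ψ : A →ₐ[ℂ] ℂ => ψ (e t)) h
      simp only [hφt_apply, hse] at h'
      rw [h', hsingle, if_pos rfl]
    rw [hsingle] at h0
    by_contra hne
    rw [if_neg hne] at h0
    exact zero_ne_one h0
  have hsurj : Function.Surjective φt := by
    intro ψ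
    have hu : ∀ s t, ψ (e s) * ψ (e t) = if s = t then ψ (e t) else 0 := by
      intro s t
      rw [← map_mul, hee]
      split_ifs <;> simp
    have hsum : (∑ t, ψ (e t)) = 1 := by rw [← map_sum, hsum_e, map_one]
    have hex : ∃ t, ψ (e t) ≠ 0 := by
      by_contra h
      push_neg at h
      rw [Finset.sum_congr rfl fun t _ => h t] at hsum
      simp at hsum
    obtain ⟨t₀, ht₀⟩ := hex
    have h1 : ψ (e t₀) = 1 := by
      have := hu t₀ t₀
      rw [if_pos rfl] at this
      have h' : ψ (e t₀) * ψ (e t₀) = ψ (e t₀) * 1 := by rw [this, mul_one]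
      exact mul_left_cancel₀ ht₀ h'
    have hzero : ∀ t, t ≠ t₀ → ψ (e t) = 0 := by
      intro t ht
      have := hu t t₀
      rw [if_neg ht, h1, mul_one] at this
      exact this
    refine ⟨t₀, ?_⟩
    ext a
    rw [hφt_apply]
    conv_rhs => rw [haux a]
    rw [map_sum]
    simp only [map_smul, smul_eq_mul]
    rw [Finset.sum_eq_single t₀]
    · rw [h1, mul_one]
    · intro t _ ht
      rw [hzero t ht, mul_zero]
    · intro h
      exact absurd (Finset.mem_univ t₀) h
  set E : ι ≃ (A →ₐ[ℂ] ℂ) := Equiv.ofBijective φt ⟨hinj, hsurj⟩ with hE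
  have hEt : ∀ t, E t = φt t := fun t => rfl
  -- character orthogonality
  have horth_char : ∀ m k, (∑ φ : A →ₐ[ℂ] ℂ,
      φ (b m) * starRingEnd ℂ (φ (b k)) / φ (∑ l, φ (b l) • st (b l)))
      = if m = k then 1 else 0 := by
    intro m k
    rw [← Equiv.sum_comp E (fun φ : A →ₐ[ℂ] ℂ =>
      φ (b m) * starRingEnd ℂ (φ (b k)) / φ (∑ l, φ (b l) • st (b l)))]
    rw [← horth_coord m k]
    refine Finset.sum_congr rfl fun t _ => ?_
    rw [hEt]
    have hinv : (φt t (∑ l, φt t (b l) • st (b l)))⁻¹ = w t :=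
      (eq_inv_of_mul_eq_one_left (hwf t)).symm
    rw [div_eq_mul_inv, hinv, hφt_apply, hφt_apply]
  -- conclusion
  intro i j k
  have hchar_mul : ∀ φ : A →ₐ[ℂ] ℂ, φ (b i) * φ (b j) = ∑ m, N i j m * φ (b m) := by
    intro φ
    rw [← map_mul, hN, map_sum]
    refine Finset.sum_congr rfl fun m _ => by rw [map_smul, smul_eq_mul]
  calc N i j k = ∑ m, N i j m * (if m = k then 1 else 0) := by simp
    _ = ∑ m, N i j m * ∑ φ : A →ₐ[ℂ] ℂ,
          φ (b m) * starRingEnd ℂ (φ (b k)) / φ (∑ l, φ (b l) • st (b l)) := by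
        refine Finset.sum_congr rfl fun m _ => by rw [horth_char]
    _ = ∑ m, ∑ φ : A →ₐ[ℂ] ℂ,
          N i j m * (φ (b m) * starRingEnd ℂ (φ (b k)) / φ (∑ l, φ (b l) • st (b l))) := by
        refine Finset.sum_congr rfl fun m _ => by rw [Finset.mul_sum]
    _ = ∑ φ : A →ₐ[ℂ] ℂ, ∑ m,
          N i j m * (φ (b m) * starRingEnd ℂ (φ (b k)) / φ (∑ l, φ (b l) • st (b l))) :=
        Finset.sum_comm
    _ = ∑ φ : A →ₐ[ℂ] ℂ, φ (b i) * φ (b j) * starRingEnd ℂ (φ (b k)) /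
          φ (∑ l, φ (b l) • st (b l)) := by
        refine Finset.sum_congr rfl fun φ _ => ?_
        rw [hchar_mul φ, Finset.sum_mul, Finset.sum_div]
        refine Finset.sum_congr rfl fun m _ => ?_
        ring
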